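/- For the sequence x_0 = 1, x_{k+1} = x_k + exp(1/x_k), one has x_k ≥ k + 1 for all k, and x_k / k → 1 as k → ∞. -/

import Mathlib

open Filter Finset

theorem stmt_7 (x : ℕ → ℝ)
    (h0 : x 0 = 1)
    (hrec : ∀ k, x (k + 1) = x k + Real.exp (1 / x k)) :
    (∀ k : ℕ, (k : ℝ) + 1 ≤ x k) ∧
      Tendsto (fun k : ℕ => x k / (k : ℝ)) atTop (nhds 1) := by
  have hlb : ∀ k : ℕ, (k : ℝ) + 1 ≤ x k := by
    intro k
    induction k with
    | zero => simp [h0]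
    | succ n ih =>
      have hn : (0:ℝ) ≤ n := Nat.cast_nonneg n
      have hpos : (0:ℝ) < x n := by linarith
      have hexp : (1:ℝ) ≤ Real.exp (1 / x n) := Real.one_le_exp (by positivity)
      rw [hrec]
      push_cast
      linarith
  refine ⟨hlb, ?_⟩
  have hsum : ∀ n, x n = 1 + ∑ i ∈ Finset.range n, Real.exp (1 / x i) := by
    intro n
    induction n with
    | zero => simp [h0]
    | succ n ih =>
      rw [hrec, Finset.sum_range_succ, ih]; ring
  have h1 : Tendsto (fun i : ℕ => 1 / x i) atTop (nhds 0) := by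
    refine squeeze_zero (fun i => ?_) (fun i => ?_) tendsto_one_div_add_atTop_nhds_zero_nat
    · have hx : (0:ℝ) < x i :=
        lt_of_lt_of_le (by positivity) (hlb i)
      exact one_div_nonneg.mpr hx.le
    · exact one_div_le_one_div_of_le (by exact_mod_cast Nat.succ_pos i) (hlb i)
  have hu : Tendsto (fun i : ℕ => Real.exp (1 / x i)) atTop (nhds 1) := by
    have := (Real.continuous_exp.tendsto 0).comp h1
    simpa [Function.comp_def] using this
  have hces := hu.cesaro
  have hz : Tendsto (fun n : ℕ => 1 / (n : ℝ)) atTop (nhds 0) :=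
    tendsto_one_div_atTop_nhds_zero_nat
  have : Tendsto (fun n : ℕ => 1 / (n:ℝ) + (n:ℝ)⁻¹ * ∑ i ∈ Finset.range n, Real.exp (1 / x i))
      atTop (nhds (0 + 1)) := hz.add hces
  rw [zero_add] at this
  refine this.congr fun n => ?_
  rw [hsum n, add_div]; ring
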